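/- Let (W,S) be a Coxeter system, 𝓘 an ideal of W in the left weak order with 𝓘 ⊆ D_J for some J ⊆ S, K ⊆ S, and d ∈ D_K⁻¹ ∩ 𝓘. Then K ∩ dJd⁻¹ ⊆ Pos(𝓘_d), i.e. for every v ∈ W_K with vd ∈ 𝓘 and every s ∈ K with sd = dr for some r ∈ J, one has l(vs) > l(v). -/

import Mathlib

section CoxAuxSection
open List

namespace CoxAux

open scoped Classical

variable {B W : Type*} [Group W] {M : CoxeterMatrix B} (cs : CoxeterSystem M W)

local prefix:100 "s" => cs.simple
local prefix:100 "π" => cs.wordProd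
local prefix:100 "ℓ" => cs.length
local prefix:100 "ris" => cs.rightInvSeq

theorem conj_conj (i : B) (a : W) : s i * (s i * a * s i) * s i = a := by
  have h : s i * (s i * a * s i) * s i = (s i * s i) * a * (s i * s i) := by group
  rw [h, cs.simple_mul_simple_self, one_mul, mul_one]

theorem simple_conj_eq_iff (i : B) (a b : W) : s i * a * s i = b ↔ a = s i * b * s i := by
  constructor
  · intro h
    rw [← h]
    exact (conj_conj cs i a).symm
  · intro h
    rw [h]
    exact conj_conj cs i b

/-- The sign-permutation of `W × ZMod 2` attached to a simple reflection. -/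
noncomputable def eta (i : B) : W × ZMod 2 → W × ZMod 2 :=
  fun p => (s i * p.1 * s i, p.2 + if p.1 = s i then 1 else 0)

theorem eta_invol (i : B) : Function.Involutive (eta cs i) := by
  have h11 : (1 : ZMod 2) + 1 = 0 := by decide
  intro p
  obtain ⟨w, e⟩ := p
  simp only [eta]
  have h2 : (s i * w * s i = s i) ↔ (w = s i) := by
    rw [simple_conj_eq_iff]
    rw [mul_assoc, cs.simple_mul_simple_self, mul_one]
  ext
  · exact conj_conj cs i w
  · simp only [h2]
    by_cases h : w = s i
    · simp [h, add_assoc, h11]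
    · simp [h]

/-- The sign permutation. -/
noncomputable def etaPerm (i : B) : Equiv.Perm (W × ZMod 2) :=
  (eta_invol cs i).toPerm

theorem etaPerm_apply (i : B) (w : W) (e : ZMod 2) :
    etaPerm cs i (w, e) = (s i * w * s i, e + if w = s i then 1 else 0) := rfl

theorem etaPerm_liftable : M.IsLiftable (etaPerm cs) := by
  intro i i'
  set m := M i i' with hm
  set p : W := s i * s i' with hp
  have hpinv : p⁻¹ = s i' * s i := by rw [hp, mul_inv_rev, cs.inv_simple, cs.inv_simple]
  have hcomm : s i' * p = p⁻¹ * s i' := by rw [hpinv, hp, mul_assoc]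
  have hswap : ∀ k : ℕ, s i' * p ^ k = (p ^ k)⁻¹ * s i' := by
    intro k
    induction k with
    | zero => simp
    | succ k ih =>
      rw [pow_succ, ← mul_assoc, ih, mul_inv_rev, mul_assoc, hcomm, ← mul_assoc]
      group
  have key1 : ∀ k : ℕ, (p ^ k)⁻¹ * s i' * p ^ k = s i' * p ^ (2 * k) := by
    intro k
    rw [← hswap k, mul_assoc, ← pow_add, ← two_mul]
  have key2 : ∀ k : ℕ, (p ^ k)⁻¹ * (s i' * p) * p ^ k = s i' * p ^ (2 * k + 1) := by
    intro k
    calc (p ^ k)⁻¹ * (s i' * p) * p ^ k = ((p ^ k)⁻¹ * s i') * p ^ (k+1) := by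
          rw [pow_succ]; group
      _ = (s i' * p ^ k) * p ^ (k+1) := by rw [hswap]
      _ = s i' * p ^ (2 * k + 1) := by
          rw [mul_assoc, ← pow_add, show k + (k+1) = 2*k+1 by omega]
  have hiter : ∀ (k : ℕ) (w : W) (e : ZMod 2),
      ((etaPerm cs i * etaPerm cs i') ^ k) (w, e) =
        (p ^ k * w * (p ^ k)⁻¹,
          e + ∑ j ∈ Finset.range (2 * k), (if w = s i' * p ^ j then 1 else 0)) := by
    intro k
    induction k with
    | zero => intro w e; simp
    | succ k ih =>
      intro w e
      rw [pow_succ', Equiv.Perm.mul_apply, ih, Equiv.Perm.mul_apply, etaPerm_apply, etaPerm_apply]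
      have hcond1 : (p ^ k * w * (p ^ k)⁻¹ = s i') ↔ (w = s i' * p ^ (2 * k)) := by
        rw [← key1 k]
        constructor
        · intro h
          rw [← h]; group
        · intro h
          rw [h]; group
      have hcond2 : (s i' * (p ^ k * w * (p ^ k)⁻¹) * s i' = s i) ↔
          (w = s i' * p ^ (2 * k + 1)) := by
        rw [simple_conj_eq_iff]
        have h2 : s i' * s i * s i' = s i' * p := by rw [hp, ← mul_assoc]
        rw [h2, ← key2 k]
        constructor
        · intro h
          rw [← h]; group
        · intro h
          rw [h]; group
      have hfirst : s i * (s i' * (p ^ k * w * (p ^ k)⁻¹) * s i') * s i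
          = p ^ (k+1) * w * (p ^ (k+1))⁻¹ := by
        have e1 : s i * (s i' * (p ^ k * w * (p ^ k)⁻¹) * s i') * s i
            = (s i * s i') * (p ^ k * w * (p ^ k)⁻¹) * (s i' * s i) := by group
        rw [e1, ← hp, ← hpinv]
        group
      have hsum : ∑ j ∈ Finset.range (2 * (k+1)), (if w = s i' * p ^ j then (1 : ZMod 2) else 0)
          = (∑ j ∈ Finset.range (2 * k), (if w = s i' * p ^ j then (1 : ZMod 2) else 0))
            + (if w = s i' * p ^ (2 * k) then 1 else 0)
            + (if w = s i' * p ^ (2 * k + 1) then 1 else 0) := by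
        rw [show 2 * (k+1) = (2 * k + 1) + 1 by ring, Finset.sum_range_succ,
          Finset.sum_range_succ]
      ext
      · exact hfirst
      · simp only [hcond1, hcond2, hsum]
        ring
  have hpm : p ^ m = 1 := cs.simple_mul_simple_pow i i'
  have key : ∀ x : W × ZMod 2, ((etaPerm cs i * etaPerm cs i') ^ m) x = x := by
    rintro ⟨w, e⟩
    rw [hiter m w e]
    have hsum0 : ∑ j ∈ Finset.range (2 * m), (if w = s i' * p ^ j then (1:ZMod 2) else 0) = 0 := by
      rw [two_mul, Finset.sum_range_add]
      have : ∀ j, (if w = s i' * p ^ (m + j) then (1:ZMod 2) else 0)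
          = (if w = s i' * p ^ j then (1:ZMod 2) else 0) := by
        intro j; rw [pow_add, hpm, one_mul]
      simp only [this]
      exact CharTwo.add_self_eq_zero _
    rw [hsum0, hpm]
    simp
  exact Equiv.ext key

/-- The sign representation homomorphism. -/
noncomputable def signRep : W →* Equiv.Perm (W × ZMod 2) :=
  cs.lift ⟨etaPerm cs, etaPerm_liftable cs⟩

theorem signRep_simple (i : B) : signRep cs (s i) = etaPerm cs i :=
  cs.lift_apply_simple (etaPerm_liftable cs) i


theorem signRep_wordProd (ω : List B) (w : W) (e : ZMod 2) :
    signRep cs (π ω) (w, e)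
      = (π ω * w * (π ω)⁻¹, e + ((ris ω).count w : ZMod 2)) := by
  induction ω generalizing w e with
  | nil => simp [CoxeterSystem.wordProd_nil]
  | cons i μ ih =>
    rw [cs.wordProd_cons, map_mul, Equiv.Perm.mul_apply, ih, signRep_simple, etaPerm_apply]
    have hris : ris (i :: μ) = ((π μ)⁻¹ * s i * π μ) :: ris μ := rfl
    rw [hris, List.count_cons]
    have hcond : (π μ * w * (π μ)⁻¹ = s i) ↔ (w = (π μ)⁻¹ * s i * π μ) := by
      constructor
      · intro h; rw [← h]; group
      · intro h; rw [h]; group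
    have hfirst : s i * (π μ * w * (π μ)⁻¹) * s i
        = (s i * π μ) * w * (s i * π μ)⁻¹ := by
      rw [mul_inv_rev, cs.inv_simple]; group
    ext
    · rw [hfirst]
    · simp only [hcond]
      by_cases h : w = (π μ)⁻¹ * s i * π μ
      · simp [h]
        push_cast
        ring
      · have : ¬ ((π μ)⁻¹ * s i * π μ = w) := fun hh => h hh.symm
        simp [h, this]

/-- Parity invariance: parity of multiplicity in the right inversion sequence only
depends on the group element. -/
theorem count_ris_parity {ω ω' : List B} (h : π ω = π ω') (w : W) :
    ((ris ω).count w : ZMod 2) = ((ris ω').count w : ZMod 2) := by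
  have h1 := signRep_wordProd cs ω w 0
  have h2 := signRep_wordProd cs ω' w 0
  rw [h] at h1
  rw [h1] at h2
  have := congrArg Prod.snd h2
  simpa using this

/-- If `s j` is a right descent of `π ω` and `ω` is reduced, then `s j ∈ ris ω`. -/
theorem mem_ris_of_rightDescent {ω : List B} (hred : cs.IsReduced ω) {j : B}
    (hdesc : ℓ (π ω * s j) < ℓ (π ω)) : s j ∈ ris ω := by
  obtain ⟨ψ, hψred, hψ⟩ := cs.exists_reduced_word' (π ω * s j)
  have hprod : π (ψ.concat j) = π ω := by
    rw [cs.wordProd_concat, ← hψ, mul_assoc, cs.simple_mul_simple_self, mul_one]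
  have hpar := count_ris_parity cs hprod (s j)
  have hnotmem : s j ∉ ris ψ := by
    intro hmem
    have := (cs.isRightInversion_of_mem_rightInvSeq hψred hmem).2
    rw [← hψ, mul_assoc, cs.simple_mul_simple_self, mul_one] at this
    omega
  have hcount : (ris (ψ.concat j)).count (s j) = (ris ψ).count (s j) + 1 := by
    rw [cs.rightInvSeq_concat, List.concat_eq_append, List.count_append]
    have hfix : MulAut.conj (s j) (s j) = s j := by
      simp [MulAut.conj_apply]
    have h1 : (List.map (⇑(MulAut.conj (s j))) (ris ψ)).count (s j) = (ris ψ).count (s j) := by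
      nth_rw 1 [← hfix]
      exact List.count_map_of_injective _ _ (MulAut.conj (s j)).injective _
    rw [h1]
    simp
  rw [List.count_eq_zero_of_not_mem hnotmem] at hcount
  rw [hcount] at hpar
  by_contra hmem
  rw [List.count_eq_zero_of_not_mem hmem] at hpar
  norm_num at hpar

/-- Right exchange property. -/
theorem right_exchange {ω : List B} (hred : cs.IsReduced ω) {j : B}
    (hdesc : ℓ (π ω * s j) < ℓ (π ω)) :
    ∃ k < ω.length, π ω * s j = π (ω.eraseIdx k) := by
  have hmem := mem_ris_of_rightDescent cs hred hdesc
  obtain ⟨k, hk, hkeq⟩ := List.getElem_of_mem hmem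
  refine ⟨k, by simpa using hk, ?_⟩
  have : (ris ω).getD k 1 = s j := by
    rw [List.getD_eq_getElem _ _ hk, hkeq]
  rw [← this]
  exact cs.wordProd_mul_getD_rightInvSeq ω k


/-- The key "lifting" fact. -/
theorem fact_comm (x : W) (i j : B) (hi : ℓ (s i * x) = ℓ x + 1)
    (hj : ℓ (x * s j) = ℓ x + 1) (hij : ℓ (s i * x * s j) = ℓ x) :
    s i * x = x * s j := by
  obtain ⟨ρ, hρlen, hρ⟩ := cs.exists_reduced_word x⁻¹
  have hρlen' : ρ.length = ℓ x := by rw [← cs.length_inv, hρ, hρlen]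
  have hζprod : π (j :: ρ) = (x * s j)⁻¹ := by
    rw [cs.wordProd_cons, ← hρ, mul_inv_rev, cs.inv_simple]
  have hζred : cs.IsReduced (j :: ρ) := by
    show ℓ (π (j :: ρ)) = (j :: ρ).length
    rw [hζprod, cs.length_inv, hj, List.length_cons, hρlen']
  have hdesc : ℓ (π (j :: ρ) * s i) < ℓ (π (j :: ρ)) := by
    rw [hζprod]
    have h1 : (x * s j)⁻¹ * s i = ((s i)⁻¹ * (x * s j))⁻¹ := by group
    rw [cs.inv_simple] at h1
    rw [h1, cs.length_inv, ← mul_assoc, hij, cs.length_inv, hj]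
    omega
  obtain ⟨k, hk, hkeq⟩ := right_exchange cs hζred hdesc
  match k with
  | 0 =>
    rw [hζprod] at hkeq
    have : (x * s j)⁻¹ * s i = x⁻¹ := by
      rw [hkeq, List.eraseIdx_cons_zero, ← hρ]
    have h2 := congrArg (fun z => (x * s j) * z * x) this
    rw [← mul_assoc, mul_inv_cancel, one_mul, mul_assoc, inv_mul_cancel, mul_one] at h2
    rw [← h2]
  | (k' + 1) =>
    exfalso
    rw [hζprod, List.eraseIdx_cons_succ, cs.wordProd_cons] at hkeq
    have h3 : x⁻¹ * s i = π (ρ.eraseIdx k') := by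
      have := congrArg (fun z => s j * z) hkeq
      rw [← mul_assoc, ← mul_assoc, cs.simple_mul_simple_self, one_mul] at this
      rw [← this, mul_inv_rev, cs.inv_simple, ← mul_assoc, cs.simple_mul_simple_self, one_mul]
    have h4 : ℓ (x⁻¹ * s i) ≤ (ρ.eraseIdx k').length := by
      rw [h3]; exact cs.length_wordProd_le _
    have hk' : k' < ρ.length := by
      have := hk
      simp only [List.length_cons] at this
      omega
    rw [List.length_eraseIdx, if_pos hk'] at h4
    have h5 : ℓ (x⁻¹ * s i) = ℓ (s i * x) := by
      have : x⁻¹ * s i = (s i * x)⁻¹ := by rw [mul_inv_rev, cs.inv_simple]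
      rw [this, cs.length_inv]
    omega

/-- Lemma A: propagation of a left ascent across a length-additive product. -/
theorem lemA : ∀ (ω : List B) (x : W) (i : B), ℓ (s i * x) = ℓ x + 1 →
    ℓ (x * π ω) = ℓ x + ω.length →
    ℓ (s i * (x * π ω)) = ℓ (x * π ω) + 1 ∨
      ∃ y, ℓ y < ω.length ∧ s i * (x * π ω) = x * y := by
  intro ω
  induction ω with
  | nil =>
    intro x i hi _
    left
    simpa using hi
  | cons j ω' ih =>
    intro x i hi hadd
    have hπ : x * π (j :: ω') = (x * s j) * π ω' := by
      rw [cs.wordProd_cons, ← mul_assoc]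
    have hlenω : (j :: ω').length = ω'.length + 1 := rfl
    have hup : ℓ (x * π (j :: ω')) ≤ ℓ (x * s j) + ω'.length := by
      rw [hπ]
      calc ℓ ((x * s j) * π ω') ≤ ℓ (x * s j) + ℓ (π ω') := cs.length_mul_le _ _
        _ ≤ ℓ (x * s j) + ω'.length := by
            have := cs.length_wordProd_le ω'
            omega
    have hxj : ℓ (x * s j) = ℓ x + 1 := by
      rcases cs.length_mul_simple x j with h | h
      · exact h
      · rw [hlenω] at hadd
        omega
    have hadd' : ℓ ((x * s j) * π ω') = ℓ (x * s j) + ω'.length := by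
      rw [← hπ, hadd, hxj, hlenω]
      omega
    rcases cs.length_simple_mul (x * s j) i with hgrow | hshrink
    · rcases ih (x * s j) i hgrow hadd' with h | ⟨y', hy', heq⟩
      · left
        rw [hπ]
        exact h
      · right
        refine ⟨s j * y', ?_, ?_⟩
        · calc ℓ (s j * y') ≤ ℓ (s j) + ℓ y' := cs.length_mul_le _ _
            _ = 1 + ℓ y' := by rw [cs.length_simple]
            _ < 1 + ω'.length := by omega
            _ = (j :: ω').length := by rw [hlenω]; omega
        · rw [hπ, heq, mul_assoc]
    · -- the "fold" case
      have hij : ℓ (s i * x * s j) = ℓ x := by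
        rw [mul_assoc]
        omega
      have hc := fact_comm cs x i j hi hxj hij
      right
      refine ⟨π ω', ?_, ?_⟩
      · have := cs.length_wordProd_le ω'
        rw [hlenω]
        omega
      · calc s i * (x * π (j :: ω')) = s i * (x * (s j * π ω')) := by rw [cs.wordProd_cons]
          _ = (s i * x) * (s j * π ω') := by rw [mul_assoc]
          _ = (x * s j) * (s j * π ω') := by rw [hc]
          _ = x * (s j * (s j * π ω')) := by rw [mul_assoc]
          _ = x * π ω' := by rw [cs.simple_mul_simple_cancel_left]

theorem isReduced_nil : cs.IsReduced ([] : List B) := by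
  show ℓ (π []) = _
  simp [cs.wordProd_nil]

/-- Deletion property. -/
theorem deletion {ω : List B} (h : ¬ cs.IsReduced ω) :
    ∃ ω' : List B, ω'.length + 2 = ω.length ∧ π ω' = π ω ∧ ∀ b ∈ ω', b ∈ ω := by
  have hne : ω ≠ [] := by
    rintro rfl
    exact h (isReduced_nil cs)
  have hlenpos : 0 < ω.length := List.length_pos_iff.mpr hne
  have hex : ∃ n, ¬ cs.IsReduced (ω.take (n+1)) := by
    refine ⟨ω.length - 1, ?_⟩
    rw [show ω.length - 1 + 1 = ω.length by omega, List.take_length]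
    exact h
  let m := Nat.find hex
  have hm : ¬ cs.IsReduced (ω.take (m+1)) := Nat.find_spec hex
  have hmin : ∀ k < m, cs.IsReduced (ω.take (k+1)) := by
    intro k hk
    by_contra hcon
    have h2 : m ≤ k := Nat.find_le hcon
    omega
  have hmle : m ≤ ω.length - 1 := by
    apply Nat.find_le
    rw [show ω.length - 1 + 1 = ω.length by omega, List.take_length]
    exact h
  have hmlt : m < ω.length := by omega
  have hredm : cs.IsReduced (ω.take m) := by
    match hm2 : m with
    | 0 => simpa using isReduced_nil cs
    | (m' + 1) => exact hmin m' (by omega)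
  have htakelen : (ω.take m).length = m := by
    rw [List.length_take]
    omega
  have hℓx : ℓ (π (ω.take m)) = m := by
    rw [hredm, htakelen]
  have htake : ω.take (m+1) = ω.take m ++ [ω[m]] := by
    rw [List.take_succ, List.getElem?_eq_getElem hmlt]
    rfl
  have hπtake : π (ω.take (m+1)) = π (ω.take m) * s ω[m] := by
    rw [htake, cs.wordProd_append, cs.wordProd_singleton]
  have hdesc : ℓ (π (ω.take m) * s ω[m]) < ℓ (π (ω.take m)) := by
    have hub : ℓ (π (ω.take (m+1))) ≤ m + 1 := by
      have := cs.length_wordProd_le (ω.take (m+1))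
      rw [List.length_take] at this
      omega
    have hneq : ℓ (π (ω.take (m+1))) ≠ m + 1 := by
      intro hcon
      apply hm
      show ℓ (π (ω.take (m+1))) = (ω.take (m+1)).length
      rw [hcon, List.length_take]
      omega
    rcases cs.length_mul_simple (π (ω.take m)) ω[m] with hgrow | hshrink
    · rw [← hπtake] at hgrow
      rw [hℓx] at hgrow
      omega
    · omega
  obtain ⟨k, hk, hkeq⟩ := right_exchange cs hredm hdesc
  refine ⟨(ω.take m).eraseIdx k ++ ω.drop (m+1), ?_, ?_, ?_⟩
  · rw [List.length_append, List.length_eraseIdx, htakelen, if_pos (by omega : k < m),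
      List.length_drop]
    omega
  · rw [cs.wordProd_append, ← hkeq]
    conv_rhs => rw [← List.take_append_drop (m+1) ω]
    rw [cs.wordProd_append, hπtake]
  · intro b hb
    rcases List.mem_append.mp hb with h1 | h1
    · exact ((List.eraseIdx_sublist _ k).trans (List.take_sublist m ω)).mem h1
    · exact (List.drop_sublist (m+1) ω).mem h1

/-- Every word has a reduced word with the same product using only its letters. -/
theorem exists_reduced_subword : ∀ (n : ℕ) (ω : List B), ω.length ≤ n →
    ∃ ψ, cs.IsReduced ψ ∧ π ψ = π ω ∧ ∀ b ∈ ψ, b ∈ ω := by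
  intro n
  induction n with
  | zero =>
    intro ω hω
    have : ω = [] := List.eq_nil_of_length_eq_zero (by omega)
    subst this
    exact ⟨[], isReduced_nil cs, rfl, by simp⟩
  | succ n ih =>
    intro ω hω
    by_cases hred : cs.IsReduced ω
    · exact ⟨ω, hred, rfl, fun b hb => hb⟩
    · obtain ⟨ω', hlen, hprod, hmem⟩ := deletion cs hred
      obtain ⟨ψ, h1, h2, h3⟩ := ih ω' (by omega)
      exact ⟨ψ, h1, by rw [h2, hprod], fun b hb => hmem b (h3 b hb)⟩

theorem exists_kword {K : Set B} {u : W} (hu : u ∈ Subgroup.closure (cs.simple '' K)) :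
    ∃ ω : List B, (∀ b ∈ ω, b ∈ K) ∧ u = π ω := by
  induction hu using Subgroup.closure_induction with
  | mem x hx =>
    obtain ⟨i, hi, rfl⟩ := hx
    exact ⟨[i], by simpa using hi, (cs.wordProd_singleton i).symm⟩
  | one => exact ⟨[], by simp, (cs.wordProd_nil).symm⟩
  | mul x y hx hy ihx ihy =>
    obtain ⟨ω₁, h₁, rfl⟩ := ihx
    obtain ⟨ω₂, h₂, rfl⟩ := ihy
    refine ⟨ω₁ ++ ω₂, ?_, (cs.wordProd_append ω₁ ω₂).symm⟩
    intro b hb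
    rcases List.mem_append.mp hb with h | h
    · exact h₁ b h
    · exact h₂ b h
  | inv x hx ihx =>
    obtain ⟨ω, h₁, rfl⟩ := ihx
    exact ⟨ω.reverse, fun b hb => h₁ b (List.mem_reverse.mp hb), (cs.wordProd_reverse ω).symm⟩

theorem kword_mem_closure {K : Set B} : ∀ (ω : List B), (∀ b ∈ ω, b ∈ K) →
    π ω ∈ Subgroup.closure (cs.simple '' K) := by
  intro ω
  induction ω with
  | nil =>
    intro _
    rw [cs.wordProd_nil]
    exact Subgroup.one_mem _
  | cons i ω' ih =>
    intro h
    rw [cs.wordProd_cons]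
    refine Subgroup.mul_mem _ (Subgroup.subset_closure ⟨i, h i (by simp), rfl⟩) ?_
    exact ih (fun b hb => h b (by simp [hb]))

theorem coset_min_add {K : Set B} (d : W)
    (hmin : ∀ x ∈ Subgroup.closure (cs.simple '' K), ℓ d ≤ ℓ (x * d)) :
    ∀ ω : List B, (∀ b ∈ ω, b ∈ K) → ℓ (π ω * d) = ℓ (π ω) + ℓ d := by
  intro ω
  induction ω with
  | nil =>
    intro _
    simp [cs.wordProd_nil]
  | cons i ω' ih =>
    intro hK
    have hiK : i ∈ K := hK i (by simp)
    have IH := ih (fun b hb => hK b (by simp [hb]))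
    have hassoc : π (i :: ω') * d = s i * (π ω' * d) := by
      rw [cs.wordProd_cons, mul_assoc]
    rcases cs.length_simple_mul (π ω') i with hgrow | hshrink
    · obtain ⟨ωd, hωdlen, hωdeq⟩ := cs.exists_reduced_word d
      have hadd : ℓ (π ω' * π ωd) = ℓ (π ω') + ωd.length := by
        rw [← hωdeq, ← hωdlen, ← hωdeq]
        exact IH
      rcases lemA cs ωd (π ω') i hgrow hadd with h | ⟨y, hy, heq⟩
      · rw [← hωdeq] at h
        rw [hassoc, h, IH, cs.wordProd_cons, hgrow]
        omega
      · exfalso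
        rw [← hωdeq] at heq
        have hyval : y = ((π ω')⁻¹ * (s i * π ω')) * d := by
          have h0 : π ω' * y = s i * (π ω' * d) := heq.symm
          calc y = (π ω')⁻¹ * (π ω' * y) := by group
            _ = (π ω')⁻¹ * (s i * (π ω' * d)) := by rw [h0]
            _ = ((π ω')⁻¹ * (s i * π ω')) * d := by group
        have hmem : ((π ω')⁻¹ * (s i * π ω')) ∈ Subgroup.closure (cs.simple '' K) := by
          have h1 := kword_mem_closure cs ω' (fun b hb => hK b (by simp [hb]))
          exact Subgroup.mul_mem _ (Subgroup.inv_mem _ h1)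
            (Subgroup.mul_mem _ (Subgroup.subset_closure ⟨i, hiK, rfl⟩) h1)
        have := hmin _ hmem
        rw [← hyval] at this
        rw [← hωdlen, ← hωdeq] at hy
        omega
    · have hub : ℓ (π (i :: ω') * d) ≤ ℓ (π (i :: ω')) + ℓ d := cs.length_mul_le _ _
      have hcons : ℓ (π (i :: ω')) = ℓ (s i * π ω') := by rw [cs.wordProd_cons]
      rcases cs.length_simple_mul (π ω' * d) i with h1 | h1
      · -- impossible by upper bound
        rw [hassoc] at hub ⊢
        rw [hcons] at hub
        omega
      · rw [hassoc, hcons]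
        omega

/-- The main coset length lemma. -/
theorem coset_add {K : Set B} (d : W) (hd : ∀ i ∈ K, ℓ d < ℓ (s i * d)) :
    ∀ u ∈ Subgroup.closure (cs.simple '' K), ℓ (u * d) = ℓ u + ℓ d := by
  classical
  set S : Set ℕ := {n | ∃ x ∈ Subgroup.closure (cs.simple '' K), n = ℓ (x * d)} with hS
  have hSne : S.Nonempty := ⟨ℓ d, 1, Subgroup.one_mem _, by rw [one_mul]⟩
  obtain ⟨u₀, hu₀mem, hn₀⟩ := Nat.sInf_mem hSne
  have hminle : ∀ x ∈ Subgroup.closure (cs.simple '' K), sInf S ≤ ℓ (x * d) :=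
    fun x hx => Nat.sInf_le ⟨x, hx, rfl⟩
  set d₀ := u₀ * d with hd₀
  have hmin0 : ∀ x ∈ Subgroup.closure (cs.simple '' K), ℓ d₀ ≤ ℓ (x * d₀) := by
    intro x hx
    have h1 : x * d₀ = (x * u₀) * d := by rw [hd₀, mul_assoc]
    rw [h1, ← hn₀]
    exact hminle _ (Subgroup.mul_mem _ hx hu₀mem)
  have CL0 : ∀ x ∈ Subgroup.closure (cs.simple '' K), ℓ (x * d₀) = ℓ x + ℓ d₀ := by
    intro x hx
    obtain ⟨ω, hωK, rfl⟩ := exists_kword cs hx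
    exact coset_min_add cs d₀ hmin0 ω hωK
  have hcmem : u₀⁻¹ ∈ Subgroup.closure (cs.simple '' K) := Subgroup.inv_mem _ hu₀mem
  have hcd : u₀⁻¹ * d₀ = d := by rw [hd₀, ← mul_assoc, inv_mul_cancel, one_mul]
  have hnodesc : ∀ i ∈ K, ℓ u₀⁻¹ < ℓ (s i * u₀⁻¹) := by
    intro i hi
    have h1 : ℓ (s i * d) = ℓ (s i * u₀⁻¹) + ℓ d₀ := by
      rw [← hcd, ← mul_assoc]
      exact CL0 _ (Subgroup.mul_mem _ (Subgroup.subset_closure ⟨i, hi, rfl⟩) hcmem)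
    have h2 : ℓ d = ℓ u₀⁻¹ + ℓ d₀ := by
      rw [← hcd]
      exact CL0 _ hcmem
    have := hd i hi
    omega
  have hc1 : u₀⁻¹ = 1 := by
    obtain ⟨ω, hωK, hωeq⟩ := exists_kword cs hcmem
    obtain ⟨ψ, hψred, hψprod, hψmem⟩ := exists_reduced_subword cs ω.length ω le_rfl
    cases ψ with
    | nil =>
      rw [hωeq, ← hψprod, cs.wordProd_nil]
    | cons i ψ' =>
      exfalso
      have hiK : i ∈ K := hωK i (hψmem i (by simp))
      have hcval : u₀⁻¹ = s i * π ψ' := by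
        rw [hωeq, ← hψprod, cs.wordProd_cons]
      have h1 : s i * u₀⁻¹ = π ψ' := by
        rw [hcval, cs.simple_mul_simple_cancel_left]
      have h2 : ℓ u₀⁻¹ = ψ'.length + 1 := by
        have h4 := hψred
        rw [hωeq, ← hψprod]
        exact h4
      have h3 : ℓ (s i * u₀⁻¹) ≤ ψ'.length := by
        rw [h1]
        exact cs.length_wordProd_le _
      have := hnodesc i hiK
      omega
  have hu₀ : u₀ = 1 := by
    rw [← inv_inv u₀, hc1, inv_one]
  intro u hu
  have := CL0 u hu
  rw [hd₀, hu₀, one_mul] at this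
  exact this

end CoxAux

section
variable {B W : Type*} [Group W] {M : CoxeterMatrix B} (cs : CoxeterSystem M W)

/-- The left weak order: `v ≤_L w` iff `l(w) = l(wv⁻¹) + l(v)`. -/
def leftWeakLE (v w : W) : Prop :=
  cs.length w = cs.length (w * v⁻¹) + cs.length v

/-- If `𝓘 ⊆ D_J` is an ideal of `(W, ≤_L)` and `d ∈ D_K⁻¹ ∩ 𝓘`, then
`K ∩ dJd⁻¹ ⊆ Pos(𝓘_d)`: for every `v ∈ W_K` with `vd ∈ 𝓘` and every `s ∈ K` with
`sd = dr` for some `r ∈ J`, we have `l(vs) > l(v)`. -/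
theorem conjInter_subset_pos (𝓘 : Set W) (J K : Set B)
    (hIdeal : ∀ w ∈ 𝓘, ∀ v : W, leftWeakLE cs v w → v ∈ 𝓘)
    (hIDJ : ∀ w ∈ 𝓘, ∀ j ∈ J, cs.length (w * cs.simple j) > cs.length w)
    (d : W)
    (hd : ∀ i ∈ K, cs.length (cs.simple i * d) > cs.length d)
    (hdI : d ∈ 𝓘) :
    ∀ v ∈ (Subgroup.closure (cs.simple '' K) : Subgroup W), v * d ∈ 𝓘 →
      ∀ i ∈ K, (∃ j ∈ J, cs.simple i * d = d * cs.simple j) →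
        cs.length (v * cs.simple i) > cs.length v := by
  intro v hv hvI i hiK hconj
  obtain ⟨j, hjJ, hcomm⟩ := hconj
  have hd' : ∀ k ∈ K, cs.length d < cs.length (cs.simple k * d) := hd
  have hadd := CoxAux.coset_add cs d hd'
  have h1 : cs.length (v * d) = cs.length v + cs.length d := hadd v hv
  have hvi : v * cs.simple i ∈ (Subgroup.closure (cs.simple '' K) : Subgroup W) :=
    Subgroup.mul_mem _ hv (Subgroup.subset_closure ⟨i, hiK, rfl⟩)
  have h2 : cs.length ((v * cs.simple i) * d) = cs.length (v * cs.simple i) + cs.length d :=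
    hadd _ hvi
  have h3 : (v * cs.simple i) * d = (v * d) * cs.simple j := by
    rw [mul_assoc, hcomm, ← mul_assoc]
  have h4 : cs.length ((v * d) * cs.simple j) > cs.length (v * d) := hIDJ (v * d) hvI j hjJ
  rw [h3] at h2
  omega

end
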